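/- arXiv:2412.08039 — 2 statements merged into one kernel-verified Lean document; each statement's English description precedes it below -/
import Mathlib

section
/- Let φ(z) = d(z,0)^{-b} for a real number b, where d is the Grushin distance. Then on the set where x ≠ 0 (so that d(z,0) > 0), the Grushin Laplacian satisfies Δ_γ φ(z) = b(b - N_γ + 2) · (1/(1+γ)²) · |x|^{2γ} · d(z,0)^{-b-2-2γ}, where N_γ = N + (1+γ)l. -/
open MeasureTheory Filter

abbrev GSp (N l : ℕ) := (Fin N → ℝ) × (Fin l → ℝ)

/-- Euclidean norm on `Fin n → ℝ`. -/
noncomputable def xnorm {n : ℕ} (x : Fin n → ℝ) : ℝ := Real.sqrt (∑ i, x i ^ 2)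

/-- The Grushin (quasi-)distance to the origin. -/
noncomputable def gdist {N l : ℕ} (γ : ℝ) (z : GSp N l) : ℝ :=
  ((1 / (1 + γ) ^ 2) * xnorm z.1 ^ (2 + 2 * γ) + xnorm z.2 ^ 2) ^ (1 / (2 + 2 * γ))

/-- Second derivative of `u` at `z` in direction `v`. -/
noncomputable def deriv2 {N l : ℕ} (u : GSp N l → ℝ) (z v : GSp N l) : ℝ :=
  iteratedFDeriv ℝ 2 u z ![v, v]

/-- The Grushin operator `Δ_γ u = Δ_x u + |x|^{2γ} Δ_y u`. -/
noncomputable def grushin {N l : ℕ} (γ : ℝ) (u : GSp N l → ℝ) (z : GSp N l) : ℝ :=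
  (∑ i, deriv2 u z (Pi.single i 1, 0)) +
    xnorm z.1 ^ (2 * γ) * ∑ j, deriv2 u z (0, Pi.single j 1)

/-- The homogeneous dimension `N_γ = N + (1+γ)l`. -/
noncomputable def Ngamma (N l : ℕ) (γ : ℝ) : ℝ := N + (1 + γ) * l

/-- The Grushin Kelvin inversion `z ↦ (d(z,0)^{-2} x, d(z,0)^{-2-2γ} y)`. -/
noncomputable def kelvin {N l : ℕ} (γ : ℝ) (z : GSp N l) : GSp N l :=
  (gdist γ z ^ (-2 : ℝ) • z.1, gdist γ z ^ (-(2 + 2 * γ)) • z.2)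

/-- Membership in the weighted Sobolev space `H^{1,2}_γ` over a set `S`. -/
def MemHgammaOn {N l : ℕ} (γ : ℝ) (u : GSp N l → ℝ) (S : Set (GSp N l)) : Prop :=
  MemLp u 2 (volume.restrict S) ∧
  (∀ i : Fin N, MemLp (fun z => fderiv ℝ u z (Pi.single i 1, 0)) 2 (volume.restrict S)) ∧
  (∀ j : Fin l, MemLp (fun z => xnorm z.1 ^ γ * fderiv ℝ u z (0, Pi.single j 1)) 2
    (volume.restrict S))

/-- Membership in the weighted Sobolev space `H^{1,2}_γ(ℝ^{N+l})`. -/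
def MemHgamma {N l : ℕ} (γ : ℝ) (u : GSp N l → ℝ) : Prop :=
  MemHgammaOn γ u Set.univ


noncomputable def sqS {n : ℕ} (x : Fin n → ℝ) : ℝ := ∑ i, x i ^ 2

noncomputable def sqD {n : ℕ} (x : Fin n → ℝ) : (Fin n → ℝ) →L[ℝ] ℝ :=
  ∑ i, (2 * x i) • ContinuousLinearMap.proj i

lemma hasFDerivAt_sqS {n : ℕ} (x : Fin n → ℝ) : HasFDerivAt sqS (sqD x) x := by
  have h : ∀ i : Fin n, HasFDerivAt (fun x : Fin n → ℝ => x i ^ 2)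
      ((2 * x i) • (ContinuousLinearMap.proj i : (Fin n → ℝ) →L[ℝ] ℝ)) x := by
    intro i
    have h1 := (ContinuousLinearMap.proj (R := ℝ) (φ := fun _ : Fin n => ℝ) i).hasFDerivAt (x := x)
    have h2 := h1.mul h1
    have e : (fun y : Fin n → ℝ => y i ^ 2) =
        fun y => (ContinuousLinearMap.proj (R := ℝ) (φ := fun _ : Fin n => ℝ) i) y *
          (ContinuousLinearMap.proj (R := ℝ) (φ := fun _ : Fin n => ℝ) i) y := by
      ext y; simp [pow_two]
    rw [e, show ((2 * x i) • (ContinuousLinearMap.proj i : (Fin n → ℝ) →L[ℝ] ℝ))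
      = x i • (ContinuousLinearMap.proj i : (Fin n → ℝ) →L[ℝ] ℝ) +
        x i • (ContinuousLinearMap.proj i : (Fin n → ℝ) →L[ℝ] ℝ) by rw [two_mul, add_smul]]
    exact h2
  exact HasFDerivAt.fun_sum (u := Finset.univ) (fun i _ => h i)

lemma sqD_single {n : ℕ} (x : Fin n → ℝ) (j : Fin n) : sqD x (Pi.single j 1) = 2 * x j := by
  simp [sqD, Pi.single_apply]

lemma sqS_nonneg {n : ℕ} (x : Fin n → ℝ) : 0 ≤ sqS x := by
  unfold sqS; positivity

lemma sqS_pos {n : ℕ} {x : Fin n → ℝ} (hx : x ≠ 0) : 0 < sqS x := by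
  rcases Function.ne_iff.1 hx with ⟨i, hi⟩
  refine Finset.sum_pos' (fun j _ => by positivity) ⟨i, Finset.mem_univ i, ?_⟩
  have : 0 < |x i| ^ 2 := pow_pos (abs_pos.mpr hi) 2
  simpa [sq_abs] using this

lemma contDiff_sqS {n : ℕ} : ContDiff ℝ ⊤ (sqS (n := n)) := by
  unfold sqS
  exact ContDiff.sum fun i _ => (contDiff_apply ℝ ℝ i).pow 2

noncomputable def Gfun {N l : ℕ} (γ : ℝ) (w : GSp N l) : ℝ :=
  (1 / (1 + γ) ^ 2) * sqS w.1 ^ (1 + γ : ℝ) + sqS w.2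

lemma Gfun_nonneg {N l : ℕ} (γ : ℝ) (w : GSp N l) : 0 ≤ Gfun γ w := by
  unfold Gfun
  have h1 : (0:ℝ) ≤ sqS w.1 ^ (1 + γ : ℝ) := Real.rpow_nonneg (sqS_nonneg _) _
  have h2 := sqS_nonneg w.2
  positivity

lemma xnorm_rpow {n : ℕ} (x : Fin n → ℝ) (p : ℝ) : xnorm x ^ p = sqS x ^ (p / 2) := by
  rw [xnorm, show Real.sqrt (∑ i, x i ^ 2) = Real.sqrt (sqS x) from rfl,
    Real.sqrt_eq_rpow, ← Real.rpow_mul (sqS_nonneg x)]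
  congr 1; ring

lemma xnorm_sq {n : ℕ} (x : Fin n → ℝ) : xnorm x ^ 2 = sqS x := by
  rw [xnorm, show (∑ i, x i ^ 2) = sqS x from rfl]
  exact Real.sq_sqrt (sqS_nonneg x)

lemma gdist_eq {N l : ℕ} (γ : ℝ) (hγ : 0 < γ) (w : GSp N l) :
    gdist γ w = Gfun γ w ^ (1 / (2 + 2 * γ)) := by
  rw [gdist, xnorm_rpow, xnorm_sq, Gfun, show (2 + 2*γ)/2 = 1 + γ by ring]

lemma gdist_rpow_eq {N l : ℕ} (γ : ℝ) (hγ : 0 < γ) (w : GSp N l) (c : ℝ) :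
    gdist γ w ^ c = Gfun γ w ^ (c / (2 + 2 * γ)) := by
  rw [gdist_eq γ hγ, ← Real.rpow_mul (Gfun_nonneg γ w), one_div, inv_mul_eq_div]

noncomputable def GD {N l : ℕ} (γ : ℝ) (w : GSp N l) : GSp N l →L[ℝ] ℝ :=
  (1 / (1 + γ) ^ 2) • (((1 + γ) * sqS w.1 ^ ((1 + γ : ℝ) - 1)) •
    ((sqD w.1).comp (ContinuousLinearMap.fst ℝ (Fin N → ℝ) (Fin l → ℝ)))) +
  (sqD w.2).comp (ContinuousLinearMap.snd ℝ (Fin N → ℝ) (Fin l → ℝ))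

lemma hasFDerivAt_fstSq {N l : ℕ} (w : GSp N l) :
    HasFDerivAt (fun w : GSp N l => sqS w.1)
      ((sqD w.1).comp (ContinuousLinearMap.fst ℝ (Fin N → ℝ) (Fin l → ℝ))) w :=
  (hasFDerivAt_sqS w.1).comp w hasFDerivAt_fst

lemma hasFDerivAt_sndSq {N l : ℕ} (w : GSp N l) :
    HasFDerivAt (fun w : GSp N l => sqS w.2)
      ((sqD w.2).comp (ContinuousLinearMap.snd ℝ (Fin N → ℝ) (Fin l → ℝ))) w :=
  (hasFDerivAt_sqS w.2).comp w hasFDerivAt_snd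

lemma hasFDerivAt_Gfun {N l : ℕ} (γ : ℝ) {w : GSp N l} (hw : sqS w.1 ≠ 0) :
    HasFDerivAt (Gfun γ) (GD γ w) w := by
  have h2 := (((hasFDerivAt_fstSq w).rpow_const (p := 1 + γ) (Or.inl hw)).const_mul
    (1 / (1 + γ) ^ 2))
  exact h2.add (hasFDerivAt_sndSq w)

lemma GD_apply_x {N l : ℕ} (γ : ℝ) (w : GSp N l) (i : Fin N) :
    GD γ w (Pi.single i 1, (0 : Fin l → ℝ)) =
      (1 / (1 + γ) ^ 2) * ((1 + γ) * sqS w.1 ^ ((1 + γ : ℝ) - 1)) * (2 * w.1 i) := by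
  simp [GD, sqD_single]
  ring

lemma GD_apply_y {N l : ℕ} (γ : ℝ) (w : GSp N l) (j : Fin l) :
    GD γ w ((0 : Fin N → ℝ), Pi.single j 1) = 2 * w.2 j := by
  simp [GD, sqD_single]

lemma Gfun_pos {N l : ℕ} {γ : ℝ} (h1γ : 0 < 1 + γ) {w : GSp N l} (hw : sqS w.1 ≠ 0) :
    0 < Gfun γ w := by
  have h0 : 0 < sqS w.1 := lt_of_le_of_ne (sqS_nonneg _) (Ne.symm hw)
  have h1 : 0 < sqS w.1 ^ ((1 : ℝ) + γ) := Real.rpow_pos_of_pos h0 _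
  have h2 := sqS_nonneg w.2
  have h3 : 0 < (1 / (1 + γ) ^ 2) := by positivity
  have := mul_pos h3 h1
  unfold Gfun
  linarith

lemma hasFDerivAt_psi {N l : ℕ} (γ β : ℝ) (h1γ : 0 < 1 + γ) {w : GSp N l}
    (hw : sqS w.1 ≠ 0) :
    HasFDerivAt (fun w : GSp N l => Gfun γ w ^ (-β))
      (((-β) * Gfun γ w ^ (-β - 1)) • GD γ w) w :=
  (hasFDerivAt_Gfun γ hw).rpow_const (p := -β) (Or.inl (Gfun_pos h1γ hw).ne')

lemma psiD_apply_x {N l : ℕ} (γ β : ℝ) (w : GSp N l) (i : Fin N) :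
    (((-β) * Gfun γ w ^ (-β - 1)) • GD γ w) (Pi.single i 1, (0 : Fin l → ℝ)) =
      ((-β) * Gfun γ w ^ (-β - 1)) *
        ((1 / (1 + γ) ^ 2) * ((1 + γ) * sqS w.1 ^ ((1 + γ : ℝ) - 1)) * (2 * w.1 i)) := by
  rw [ContinuousLinearMap.smul_apply, GD_apply_x, smul_eq_mul]

lemma psiD_apply_y {N l : ℕ} (γ β : ℝ) (w : GSp N l) (j : Fin l) :
    (((-β) * Gfun γ w ^ (-β - 1)) • GD γ w) ((0 : Fin N → ℝ), Pi.single j 1) =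
      ((-β) * Gfun γ w ^ (-β - 1)) * (2 * w.2 j) := by
  rw [ContinuousLinearMap.smul_apply, GD_apply_y, smul_eq_mul]

lemma contDiffAt_psi {N l : ℕ} (γ β : ℝ) (h1γ : 0 < 1 + γ) {w : GSp N l}
    (hw : sqS w.1 ≠ 0) :
    ContDiffAt ℝ 2 (fun w : GSp N l => Gfun γ w ^ (-β)) w := by
  have hx1 : ContDiffAt ℝ 2 (fun w : GSp N l => sqS w.1) w :=
    ((contDiff_sqS.comp contDiff_fst).contDiffAt).of_le le_top
  have hx2 : ContDiffAt ℝ 2 (fun w : GSp N l => sqS w.2) w :=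
    ((contDiff_sqS.comp contDiff_snd).contDiffAt).of_le le_top
  have h2 := hx1.rpow_const_of_ne (p := 1 + γ) hw
  have h3 : ContDiffAt ℝ 2 (Gfun γ) w := (contDiffAt_const.mul h2).add hx2
  exact h3.rpow_const_of_ne (Gfun_pos h1γ hw).ne'

lemma deriv2_eq_fd {N l : ℕ} (u : GSp N l → ℝ) (z v : GSp N l)
    (h : DifferentiableAt ℝ (fderiv ℝ u) z) :
    deriv2 u z v = fderiv ℝ (fun w => fderiv ℝ u w v) z v := by
  rw [deriv2, iteratedFDeriv_two_apply, fderiv_clm_apply h (differentiableAt_const v)]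
  simp

lemma sum_quad {n : ℕ} (x : Fin n → ℝ) (α κ : ℝ) (f : Fin n → ℝ)
    (h : ∀ i, f i = α * (x i * x i) + κ) : ∑ i, f i = α * sqS x + n * κ := by
  have hs : ∑ i, x i * x i = sqS x := by
    unfold sqS; exact Finset.sum_congr rfl fun i _ => (pow_two _).symm
  rw [Finset.sum_congr rfl fun i _ => h i, Finset.sum_add_distrib, ← Finset.mul_sum, hs,
    Finset.sum_const, Finset.card_univ, Fintype.card_fin, nsmul_eq_mul]
/-- the Grushin Laplacian of `φ(z) = d(z,0)^{-b}`. -/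
theorem grushin_laplacian_dist_rpow {N l : ℕ} (hNl : 3 ≤ N + l) (γ b : ℝ) (hγ : 0 < γ)
    (z : GSp N l) (hx : z.1 ≠ 0) :
    grushin γ (fun w => gdist γ w ^ (-b)) z =
      b * (b - Ngamma N l γ + 2) * (1 / (1 + γ) ^ 2) * xnorm z.1 ^ (2 * γ) *
        gdist γ z ^ (-b - 2 - 2 * γ) := by
  have h1γ : (0:ℝ) < 1 + γ := by linarith
  have hS : 0 < sqS z.1 := sqS_pos hx
  have hT : 0 ≤ sqS z.2 := sqS_nonneg z.2
  have hG : 0 < Gfun γ z := Gfun_pos h1γ hS.ne'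
  set β := b / (2 + 2 * γ) with hβdef
  have hφ : (fun w : GSp N l => gdist γ w ^ (-b)) = fun w => Gfun γ w ^ (-β) := by
    funext w; rw [gdist_rpow_eq γ hγ, hβdef, neg_div]
  rw [hφ]
  have hU : {w : GSp N l | sqS w.1 ≠ 0} ∈ nhds z := by
    have hop : IsOpen {w : GSp N l | sqS w.1 ≠ 0} := by
      have : {w : GSp N l | sqS w.1 ≠ 0} = (fun w : GSp N l => sqS w.1) ⁻¹' {(0:ℝ)}ᶜ := rfl
      rw [this]
      exact (isOpen_compl_singleton).preimage (contDiff_sqS.continuous.comp continuous_fst)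
    exact hop.mem_nhds hS.ne'
  have hdiffψ : DifferentiableAt ℝ (fderiv ℝ (fun w : GSp N l => Gfun γ w ^ (-β))) z :=
    ((contDiffAt_psi γ β h1γ hS.ne').fderiv_right (m := 1) (by norm_num)).differentiableAt one_ne_zero
  have hc1 : HasFDerivAt (fun w : GSp N l => (-β) * Gfun γ w ^ (-β - 1))
      ((-β) • ((((-β - 1)) * Gfun γ z ^ (-β - 1 - 1)) • GD γ z)) z :=
    ((hasFDerivAt_Gfun γ hS.ne').rpow_const (p := -β - 1) (Or.inl hG.ne')).const_mul (-β)
  -- x-direction second derivatives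
  have keyx : ∀ i : Fin N, deriv2 (fun w : GSp N l => Gfun γ w ^ (-β)) z (Pi.single i 1, 0) =
      ((-β * ((-β - 1) * Gfun γ z ^ (-β - 1 - 1))) *
          ((1 / (1 + γ) ^ 2) * ((1 + γ) * sqS z.1 ^ ((1 + γ : ℝ) - 1))) ^ 2 * 4
        + (-β * Gfun γ z ^ (-β - 1)) *
          ((1 / (1 + γ) ^ 2) * ((1 + γ) * (((1 + γ) - 1) * sqS z.1 ^ ((1 + γ : ℝ) - 1 - 1))) * 4))
        * (z.1 i * z.1 i)
      + (-β * Gfun γ z ^ (-β - 1)) *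
          ((1 / (1 + γ) ^ 2) * ((1 + γ) * sqS z.1 ^ ((1 + γ : ℝ) - 1)) * 2) := by
    intro i
    rw [deriv2_eq_fd _ z _ hdiffψ]
    have hev : (fun w => fderiv ℝ (fun w : GSp N l => Gfun γ w ^ (-β)) w
        (Pi.single i 1, (0 : Fin l → ℝ))) =ᶠ[nhds z]
        (fun w => ((-β) * Gfun γ w ^ (-β - 1)) *
          ((1 / (1 + γ) ^ 2) * ((1 + γ) * sqS w.1 ^ ((1 + γ : ℝ) - 1)) * (2 * w.1 i))) := by
      filter_upwards [hU] with w hw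
      rw [(hasFDerivAt_psi γ β h1γ hw).fderiv, psiD_apply_x]
    rw [hev.fderiv_eq]
    have ha : HasFDerivAt (fun w : GSp N l =>
        (1 / (1 + γ) ^ 2) * ((1 + γ) * sqS w.1 ^ ((1 + γ : ℝ) - 1)))
        ((1 / (1 + γ) ^ 2) • ((1 + γ) • ((((1 + γ : ℝ) - 1) * sqS z.1 ^ ((1 + γ : ℝ) - 1 - 1)) •
          ((sqD z.1).comp (ContinuousLinearMap.fst ℝ (Fin N → ℝ) (Fin l → ℝ)))))) z :=
      (((hasFDerivAt_fstSq z).rpow_const (p := (1 + γ : ℝ) - 1) (Or.inl hS.ne')).const_mul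
        (1 + γ)).const_mul (1 / (1 + γ) ^ 2)
    have hb : HasFDerivAt (fun w : GSp N l => 2 * w.1 i)
        ((2 : ℝ) • ((ContinuousLinearMap.proj i).comp
          (ContinuousLinearMap.fst ℝ (Fin N → ℝ) (Fin l → ℝ)))) z :=
      (((ContinuousLinearMap.proj i).comp
        (ContinuousLinearMap.fst ℝ (Fin N → ℝ) (Fin l → ℝ))).hasFDerivAt).const_mul 2
    rw [(hc1.fun_mul (ha.fun_mul hb)).fderiv]
    simp only [ContinuousLinearMap.add_apply, ContinuousLinearMap.smul_apply,
      ContinuousLinearMap.coe_comp', Function.comp_apply, ContinuousLinearMap.coe_fst',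
      ContinuousLinearMap.coe_snd', ContinuousLinearMap.proj_apply, smul_eq_mul,
      sqD_single, Pi.single_eq_same, map_zero, GD]
    ring
  -- y-direction second derivatives
  have keyy : ∀ j : Fin l, deriv2 (fun w : GSp N l => Gfun γ w ^ (-β)) z (0, Pi.single j 1) =
      ((-β * ((-β - 1) * Gfun γ z ^ (-β - 1 - 1))) * 4) * (z.2 j * z.2 j)
        + (-β * Gfun γ z ^ (-β - 1)) * 2 := by
    intro j
    rw [deriv2_eq_fd _ z _ hdiffψ]
    have hev : (fun w => fderiv ℝ (fun w : GSp N l => Gfun γ w ^ (-β)) w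
        ((0 : Fin N → ℝ), Pi.single j 1)) =ᶠ[nhds z]
        (fun w => ((-β) * Gfun γ w ^ (-β - 1)) * (2 * w.2 j)) := by
      filter_upwards [hU] with w hw
      rw [(hasFDerivAt_psi γ β h1γ hw).fderiv, psiD_apply_y]
    rw [hev.fderiv_eq]
    have hb : HasFDerivAt (fun w : GSp N l => 2 * w.2 j)
        ((2 : ℝ) • ((ContinuousLinearMap.proj j).comp
          (ContinuousLinearMap.snd ℝ (Fin N → ℝ) (Fin l → ℝ)))) z :=
      (((ContinuousLinearMap.proj j).comp
        (ContinuousLinearMap.snd ℝ (Fin N → ℝ) (Fin l → ℝ))).hasFDerivAt).const_mul 2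
    rw [(hc1.fun_mul hb).fderiv]
    simp only [ContinuousLinearMap.add_apply, ContinuousLinearMap.smul_apply,
      ContinuousLinearMap.coe_comp', Function.comp_apply, ContinuousLinearMap.coe_fst',
      ContinuousLinearMap.coe_snd', ContinuousLinearMap.proj_apply, smul_eq_mul,
      sqD_single, Pi.single_eq_same, map_zero, GD]
    ring
  have hsx := sum_quad z.1 _ _ _ keyx
  have hsy := sum_quad z.2 _ _ _ keyy
  unfold grushin
  rw [hsx, hsy, xnorm_rpow z.1 (2 * γ), show 2 * γ / 2 = γ by ring,
    gdist_rpow_eq γ hγ z (-b - 2 - 2 * γ),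
    show (-b - 2 - 2 * γ) / (2 + 2 * γ) = -β - 1 by rw [hβdef]; field_simp; ring]
  have e1 : sqS z.1 ^ ((1 + γ : ℝ) - 1) = sqS z.1 ^ γ := by norm_num
  have e2 : sqS z.1 ^ ((1 + γ : ℝ) - 1 - 1) = sqS z.1 ^ γ / sqS z.1 := by
    rw [show (1 + γ : ℝ) - 1 - 1 = γ - 1 by ring, Real.rpow_sub hS, Real.rpow_one]
  have e3 : Gfun γ z ^ (-β - 1 - 1) = Gfun γ z ^ (-β - 1) / Gfun γ z := by
    rw [show -β - 1 - 1 = (-β - 1) - 1 by ring, Real.rpow_sub hG, Real.rpow_one]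
  simp only [e1, e2, e3]
  have eG : Gfun γ z = (1 / (1 + γ) ^ 2) * (sqS z.1 * sqS z.1 ^ γ) + sqS z.2 := by
    rw [Gfun, Real.rpow_add hS, Real.rpow_one]
  rw [Ngamma]
  set a := sqS z.1 ^ γ with ha
  set q := Gfun γ z ^ (-β - 1) with hq
  have hG' : (1 / (1 + γ) ^ 2) * (sqS z.1 * a) + sqS z.2 ≠ 0 := by rw [← eG]; exact hG.ne'
  rw [eG, hβdef]
  have hG'' : sqS z.1 * a + (1 + γ) ^ 2 * sqS z.2 ≠ 0 :=
    (add_pos_of_pos_of_nonneg (mul_pos hS (Real.rpow_pos_of_pos hS γ)) (mul_nonneg (sq_nonneg _) hT)).ne'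
  field_simp
  ring
end

section
/- Let Ψ(z) = c·e^{-a(d(z,0)-R)} with constants a, c, R > 0 and d the Grushin distance. Then wherever d(z,0) > 0 and x ≠ 0, one has Δ_γ Ψ(z) = a² Ψ(z) (1/(1+γ)²) d(z,0)^{-2γ} |x|^{2γ} − Ψ(z) ((N_γ−1)/(1+γ)²) a d(z,0)^{-1-2γ} |x|^{2γ}, where N_γ = N + (1+γ)l. -/
open MeasureTheory Filter

namespace GB
variable {N l : ℕ}

noncomputable def Sf (w : GSp N l) : ℝ := ∑ i, w.1 i ^ 2
noncomputable def Tf (w : GSp N l) : ℝ := ∑ j, w.2 j ^ 2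

noncomputable def XI (N l : ℕ) (i : Fin N) : GSp N l →L[ℝ] ℝ :=
  (ContinuousLinearMap.proj i).comp (ContinuousLinearMap.fst ℝ (Fin N → ℝ) (Fin l → ℝ))
noncomputable def YJ (N l : ℕ) (j : Fin l) : GSp N l →L[ℝ] ℝ :=
  (ContinuousLinearMap.proj j).comp (ContinuousLinearMap.snd ℝ (Fin N → ℝ) (Fin l → ℝ))

@[simp] lemma XI_apply (i : Fin N) (v : GSp N l) : XI N l i v = v.1 i := rfl
@[simp] lemma YJ_apply (j : Fin l) (v : GSp N l) : YJ N l j v = v.2 j := rfl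

noncomputable def Sd (w : GSp N l) : GSp N l →L[ℝ] ℝ := ∑ i, (2 * w.1 i) • XI N l i
noncomputable def Td (w : GSp N l) : GSp N l →L[ℝ] ℝ := ∑ j, (2 * w.2 j) • YJ N l j

lemma Sd_apply (w v : GSp N l) : Sd w v = ∑ i, 2 * w.1 i * v.1 i := by
  simp [Sd, smul_eq_mul]

lemma Sd_apply_x (w : GSp N l) (i : Fin N) : Sd w (Pi.single i 1, (0 : Fin l → ℝ)) = 2 * w.1 i := by
  simp [Sd_apply, Pi.single_apply, mul_ite, Finset.sum_ite_eq']

lemma Sd_apply_y (w : GSp N l) (j : Fin l) : Sd w ((0 : Fin N → ℝ), Pi.single j 1) = 0 := by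
  simp [Sd_apply]

lemma Td_apply (w v : GSp N l) : Td w v = ∑ j, 2 * w.2 j * v.2 j := by
  simp [Td, smul_eq_mul]

lemma Td_apply_y (w : GSp N l) (j : Fin l) : Td w ((0 : Fin N → ℝ), Pi.single j 1) = 2 * w.2 j := by
  simp [Td_apply, Pi.single_apply, mul_ite, Finset.sum_ite_eq']

lemma Td_apply_x (w : GSp N l) (i : Fin N) : Td w (Pi.single i 1, (0 : Fin l → ℝ)) = 0 := by
  simp [Td_apply]

lemma hasFDerivAt_Sf (w : GSp N l) : HasFDerivAt Sf (Sd w) w := by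
  have h : ∀ i : Fin N, HasFDerivAt (fun w : GSp N l => w.1 i ^ 2) ((2 * w.1 i) • XI N l i) w := by
    intro i
    have h0 : HasFDerivAt (fun w : GSp N l => w.1 i) (XI N l i) w := (XI N l i).hasFDerivAt
    have := h0.fun_mul h0
    simpa [pow_two, two_mul, add_smul] using this
  exact HasFDerivAt.fun_sum (fun i _ => h i)

lemma hasFDerivAt_Tf (w : GSp N l) : HasFDerivAt Tf (Td w) w := by
  have h : ∀ j : Fin l, HasFDerivAt (fun w : GSp N l => w.2 j ^ 2) ((2 * w.2 j) • YJ N l j) w := by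
    intro j
    have h0 : HasFDerivAt (fun w : GSp N l => w.2 j) (YJ N l j) w := (YJ N l j).hasFDerivAt
    have := h0.fun_mul h0
    simpa [pow_two, two_mul, add_smul] using this
  exact HasFDerivAt.fun_sum (fun j _ => h j)


noncomputable def rho (γ : ℝ) (w : GSp N l) : ℝ := 1 / (1 + γ) ^ 2 * Sf w ^ (1 + γ) + Tf w

noncomputable def rhoD (γ : ℝ) (w : GSp N l) : GSp N l →L[ℝ] ℝ :=
  (1 / (1 + γ) ^ 2 * ((1 + γ) * Sf w ^ γ)) • Sd w + Td w

lemma Sf_nonneg (w : GSp N l) : 0 ≤ Sf w := Finset.sum_nonneg fun i _ => sq_nonneg _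

lemma Sf_pos {w : GSp N l} (hw : w.1 ≠ 0) : 0 < Sf w := by
  obtain ⟨i, hi⟩ := Function.ne_iff.1 hw
  have hi2 : 0 < w.1 i ^ 2 := pow_two_pos_of_ne_zero hi
  exact Finset.sum_pos' (fun i _ => sq_nonneg _) ⟨i, Finset.mem_univ i, hi2⟩

lemma Tf_nonneg (w : GSp N l) : 0 ≤ Tf w := Finset.sum_nonneg fun j _ => sq_nonneg _

lemma rho_pos {γ : ℝ} (hγ : 0 < γ) {w : GSp N l} (hw : 0 < Sf w) : 0 < rho γ w := by
  have h1 : (0:ℝ) < 1 / (1 + γ) ^ 2 := by positivity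
  have h2 : (0:ℝ) < Sf w ^ (1 + γ) := Real.rpow_pos_of_pos hw _
  have := Tf_nonneg w
  unfold rho; nlinarith

lemma gdist_eq (γ : ℝ) (w : GSp N l) :
    gdist γ w = rho γ w ^ (1 / (2 + 2 * γ)) := by
  have h0 : (0:ℝ) ≤ Sf w := Sf_nonneg w
  have hx : xnorm w.1 ^ (2 + 2 * γ) = Sf w ^ (1 + γ) := by
    rw [show xnorm w.1 = Sf w ^ ((1:ℝ)/2) from Real.sqrt_eq_rpow _, ← Real.rpow_mul h0,
      show (1:ℝ)/2 * (2 + 2*γ) = 1 + γ by ring]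
  have hy : xnorm w.2 ^ 2 = Tf w := Real.sq_sqrt (Tf_nonneg w)
  rw [gdist, hx, hy, rho]

lemma hasFDerivAt_rho {γ : ℝ} {w : GSp N l} (hw : 0 < Sf w) :
    HasFDerivAt (rho γ) (rhoD γ w) w := by
  have h1 : HasFDerivAt (fun w : GSp N l => Sf w ^ (1 + γ))
      (((1 + γ) * Sf w ^ (1 + γ - 1)) • Sd w) w :=
    (hasFDerivAt_Sf w).rpow_const (Or.inl hw.ne')
  have h2 := (h1.const_mul (1 / (1 + γ) ^ 2)).add (hasFDerivAt_Tf w)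
  refine h2.congr_fderiv ?_
  rw [show (1:ℝ) + γ - 1 = γ by ring, rhoD, smul_smul]

/-- The barrier function written via `rho`. -/
noncomputable def phiF (γ a c R : ℝ) (w : GSp N l) : ℝ :=
  c * Real.exp (-a * (rho γ w ^ (1 / (2 + 2 * γ)) - R))

noncomputable def phiD (γ a c R : ℝ) (w : GSp N l) : GSp N l →L[ℝ] ℝ :=
  (c * Real.exp (-a * (rho γ w ^ (1 / (2 + 2 * γ)) - R)) *
    (-a * (1 / (2 + 2 * γ) * rho γ w ^ (1 / (2 + 2 * γ) - 1)))) • rhoD γ w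

lemma hasFDerivAt_phiF {γ a c R : ℝ} (hγ : 0 < γ) {w : GSp N l} (hw : 0 < Sf w) :
    HasFDerivAt (phiF γ a c R) (phiD γ a c R w) w := by
  have hρ : 0 < rho γ w := rho_pos hγ hw
  have h1 : HasFDerivAt (fun w : GSp N l => rho γ w ^ (1 / (2 + 2 * γ)))
      ((1 / (2 + 2 * γ) * rho γ w ^ (1 / (2 + 2 * γ) - 1)) • rhoD γ w) w :=
    (hasFDerivAt_rho hw).rpow_const (Or.inl hρ.ne')
  have h2 := ((((h1.sub_const R).const_mul (-a)).exp).const_mul c)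
  refine h2.congr_fderiv ?_
  rw [phiD, smul_smul, smul_smul, smul_smul]
  congr 1
  ring

lemma continuous_Sf : Continuous (Sf (N := N) (l := l)) := by
  unfold Sf; fun_prop

lemma differentiableAt_phiD {γ a c R : ℝ} (hγ : 0 < γ) {z : GSp N l} (hz : 0 < Sf z) :
    DifferentiableAt ℝ (phiD γ a c R) z := by
  have hρ : 0 < rho γ z := rho_pos hγ hz
  have hρd : DifferentiableAt ℝ (rho γ) z := (hasFDerivAt_rho hz).differentiableAt
  have hSd : DifferentiableAt ℝ (Sf (N := N) (l := l)) z := (hasFDerivAt_Sf z).differentiableAt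
  have hSdd : DifferentiableAt ℝ (fun w : GSp N l => Sd w) z := by
    refine DifferentiableAt.fun_sum fun i _ => DifferentiableAt.smul_const ?_ _
    exact ((XI N l i).hasFDerivAt.differentiableAt.const_mul 2 :)
  have hTdd : DifferentiableAt ℝ (fun w : GSp N l => Td w) z := by
    refine DifferentiableAt.fun_sum fun j _ => DifferentiableAt.smul_const ?_ _
    exact ((YJ N l j).hasFDerivAt.differentiableAt.const_mul 2 :)
  have hrd : DifferentiableAt ℝ (fun w : GSp N l => rhoD γ w) z := by
    refine DifferentiableAt.add (DifferentiableAt.fun_smul ?_ hSdd) hTdd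
    exact ((hSd.rpow_const (Or.inl hz.ne')).const_mul _).const_mul _
  refine DifferentiableAt.fun_smul ?_ hrd
  have h1 : DifferentiableAt ℝ (fun w : GSp N l => rho γ w ^ (1 / (2 + 2 * γ))) z :=
    hρd.rpow_const (Or.inl hρ.ne')
  have h2 : DifferentiableAt ℝ (fun w : GSp N l => rho γ w ^ (1 / (2 + 2 * γ) - 1)) z :=
    hρd.rpow_const (Or.inl hρ.ne')
  fun_prop

lemma deriv2_eq {γ a c R : ℝ} (hγ : 0 < γ) {z : GSp N l} (hz : 0 < Sf z) (v : GSp N l) :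
    iteratedFDeriv ℝ 2 (phiF γ a c R) z ![v, v] =
      fderiv ℝ (fun w => phiD γ a c R w v) z v := by
  have hρ : 0 < rho γ z := rho_pos hγ hz
  have hU : IsOpen {w : GSp N l | 0 < Sf w} := isOpen_lt continuous_const continuous_Sf
  have hmem : {w : GSp N l | 0 < Sf w} ∈ nhds z := hU.mem_nhds hz
  have heq : (fun w : GSp N l => fderiv ℝ (phiF γ a c R) w) =ᶠ[nhds z] phiD γ a c R :=
    Filter.eventually_of_mem hmem fun w hw => (hasFDerivAt_phiF hγ hw).fderiv
  have hdiff : DifferentiableAt ℝ (phiD γ a c R) z := differentiableAt_phiD hγ hz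
  rw [iteratedFDeriv_two_apply]
  simp only [Matrix.cons_val_zero, Matrix.cons_val_one, Matrix.head_cons]
  rw [heq.fderiv_eq]
  rw [fderiv_clm_apply hdiff (differentiableAt_const v)]
  simp

lemma rhoD_apply_x (γ : ℝ) (w : GSp N l) (i : Fin N) :
    rhoD γ w (Pi.single i 1, (0 : Fin l → ℝ)) =
      1 / (1 + γ) ^ 2 * ((1 + γ) * Sf w ^ γ) * (2 * w.1 i) := by
  have := Sd_apply_x w i
  have := Td_apply_x w i
  simp only [rhoD, ContinuousLinearMap.add_apply, ContinuousLinearMap.coe_smul',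
    Pi.smul_apply, smul_eq_mul, this, Sd_apply_x, Td_apply_x, add_zero]

lemma rhoD_apply_y (γ : ℝ) (w : GSp N l) (j : Fin l) :
    rhoD γ w ((0 : Fin N → ℝ), Pi.single j 1) = 2 * w.2 j := by
  simp only [rhoD, ContinuousLinearMap.add_apply, ContinuousLinearMap.coe_smul',
    Pi.smul_apply, smul_eq_mul, Sd_apply_y, Td_apply_y, mul_zero, zero_add]

lemma phiD_apply (γ a c R : ℝ) (w v : GSp N l) :
    phiD γ a c R w v = phiF γ a c R w *
      (-a * (1 / (2 + 2 * γ) * rho γ w ^ (1 / (2 + 2 * γ) - 1))) * rhoD γ w v := rfl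

lemma fderiv_phiD_x {γ a c R : ℝ} (hγ : 0 < γ) {z : GSp N l} (hz : 0 < Sf z) (i : Fin N) :
    fderiv ℝ (fun w => phiD γ a c R w (Pi.single i 1, (0 : Fin l → ℝ))) z
        (Pi.single i 1, (0 : Fin l → ℝ)) =
      (4 * (phiF γ a c R z * (-a * (1 / (2 + 2 * γ) * rho γ z ^ (1 / (2 + 2 * γ) - 1)))) *
            (1 / (1 + γ) ^ 2 * (1 + γ)) * γ * Sf z ^ (γ - 1) +
          4 * (1 / (1 + γ) ^ 2 * (1 + γ)) ^ 2 * (Sf z ^ γ) ^ 2 *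
            (phiF γ a c R z *
                (-a * (1 / (2 + 2 * γ) * ((1 / (2 + 2 * γ) - 1) * rho γ z ^ (1 / (2 + 2 * γ) - 1 - 1)))) +
              -a * (1 / (2 + 2 * γ) * rho γ z ^ (1 / (2 + 2 * γ) - 1)) *
                (phiF γ a c R z * (-a * (1 / (2 + 2 * γ) * rho γ z ^ (1 / (2 + 2 * γ) - 1)))))) *
          z.1 i ^ 2 +
        2 * (phiF γ a c R z * (-a * (1 / (2 + 2 * γ) * rho γ z ^ (1 / (2 + 2 * γ) - 1)))) *
          (1 / (1 + γ) ^ 2 * (1 + γ)) * Sf z ^ γ := by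
  have hρ : 0 < rho γ z := rho_pos hγ hz
  have hfun : (fun w : GSp N l => phiD γ a c R w (Pi.single i 1, (0 : Fin l → ℝ))) =
      fun w => phiF γ a c R w * (-a * (1 / (2 + 2 * γ) * rho γ w ^ (1 / (2 + 2 * γ) - 1))) *
        (1 / (1 + γ) ^ 2 * ((1 + γ) * Sf w ^ γ) * (2 * w.1 i)) := by
    funext w
    rw [phiD_apply, rhoD_apply_x]
  rw [hfun]
  have hm : HasFDerivAt (fun w : GSp N l =>
      -a * (1 / (2 + 2 * γ) * rho γ w ^ (1 / (2 + 2 * γ) - 1)))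
      ((-a) • ((1 / (2 + 2 * γ)) •
        (((1 / (2 + 2 * γ) - 1) * rho γ z ^ (1 / (2 + 2 * γ) - 1 - 1)) • rhoD γ z))) z :=
    (((hasFDerivAt_rho hz).rpow_const (Or.inl hρ.ne')).const_mul (1 / (2 + 2 * γ))).const_mul (-a)
  have hφ := hasFDerivAt_phiF (N := N) (l := l) (a := a) (c := c) (R := R) hγ hz
  have hP := hφ.fun_mul hm
  have hq : HasFDerivAt (fun w : GSp N l => 1 / (1 + γ) ^ 2 * ((1 + γ) * Sf w ^ γ))
      ((1 / (1 + γ) ^ 2) • ((1 + γ) • ((γ * Sf z ^ (γ - 1)) • Sd z))) z :=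
    (((hasFDerivAt_Sf z).rpow_const (Or.inl hz.ne')).const_mul (1 + γ)).const_mul (1 / (1 + γ) ^ 2)
  have hxi : HasFDerivAt (fun w : GSp N l => 2 * w.1 i) ((2 : ℝ) • XI N l i) z :=
    ((XI N l i).hasFDerivAt.const_mul 2 :)
  have hQ := hq.fun_mul hxi
  have hG := hP.fun_mul hQ
  rw [hG.fderiv]
  simp only [ContinuousLinearMap.add_apply, ContinuousLinearMap.coe_smul', Pi.smul_apply,
    smul_eq_mul, XI_apply, Sd_apply_x, rhoD_apply_x, phiD_apply, Pi.single_eq_same]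
  ring

lemma fderiv_phiD_y {γ a c R : ℝ} (hγ : 0 < γ) {z : GSp N l} (hz : 0 < Sf z) (j : Fin l) :
    fderiv ℝ (fun w => phiD γ a c R w ((0 : Fin N → ℝ), Pi.single j 1)) z
        ((0 : Fin N → ℝ), Pi.single j 1) =
      4 * (phiF γ a c R z *
            (-a * (1 / (2 + 2 * γ) * ((1 / (2 + 2 * γ) - 1) * rho γ z ^ (1 / (2 + 2 * γ) - 1 - 1)))) +
          -a * (1 / (2 + 2 * γ) * rho γ z ^ (1 / (2 + 2 * γ) - 1)) *
            (phiF γ a c R z * (-a * (1 / (2 + 2 * γ) * rho γ z ^ (1 / (2 + 2 * γ) - 1))))) *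
          z.2 j ^ 2 +
        2 * (phiF γ a c R z * (-a * (1 / (2 + 2 * γ) * rho γ z ^ (1 / (2 + 2 * γ) - 1)))) := by
  have hρ : 0 < rho γ z := rho_pos hγ hz
  have hfun : (fun w : GSp N l => phiD γ a c R w ((0 : Fin N → ℝ), Pi.single j 1)) =
      fun w => phiF γ a c R w * (-a * (1 / (2 + 2 * γ) * rho γ w ^ (1 / (2 + 2 * γ) - 1))) *
        (2 * w.2 j) := by
    funext w
    rw [phiD_apply, rhoD_apply_y]
  rw [hfun]
  have hm : HasFDerivAt (fun w : GSp N l =>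
      -a * (1 / (2 + 2 * γ) * rho γ w ^ (1 / (2 + 2 * γ) - 1)))
      ((-a) • ((1 / (2 + 2 * γ)) •
        (((1 / (2 + 2 * γ) - 1) * rho γ z ^ (1 / (2 + 2 * γ) - 1 - 1)) • rhoD γ z))) z :=
    (((hasFDerivAt_rho hz).rpow_const (Or.inl hρ.ne')).const_mul (1 / (2 + 2 * γ))).const_mul (-a)
  have hφ := hasFDerivAt_phiF (N := N) (l := l) (a := a) (c := c) (R := R) hγ hz
  have hP := hφ.fun_mul hm
  have hyj : HasFDerivAt (fun w : GSp N l => 2 * w.2 j) ((2 : ℝ) • YJ N l j) z :=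
    ((YJ N l j).hasFDerivAt.const_mul 2 :)
  have hG := hP.fun_mul hyj
  rw [hG.fderiv]
  simp only [ContinuousLinearMap.add_apply, ContinuousLinearMap.coe_smul', Pi.smul_apply,
    smul_eq_mul, YJ_apply, rhoD_apply_y, phiD_apply, Pi.single_eq_same]
  ring

end GB

/-- the Grushin Laplacian of the barrier `Ψ(z) = c e^{-a(d(z,0)-R)}`. -/
theorem grushin_laplacian_barrier {N l : ℕ} (hNl : 3 ≤ N + l) (γ a c R : ℝ) (hγ : 0 < γ)
    (ha : 0 < a) (hc : 0 < c) (hR : 0 < R)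
    (z : GSp N l) (hz : 0 < gdist γ z) (hx : z.1 ≠ 0) :
    grushin γ (fun w => c * Real.exp (-a * (gdist γ w - R))) z =
      a ^ 2 * (c * Real.exp (-a * (gdist γ z - R))) * (1 / (1 + γ) ^ 2) *
          gdist γ z ^ (-(2 * γ)) * xnorm z.1 ^ (2 * γ) -
        (c * Real.exp (-a * (gdist γ z - R))) * ((Ngamma N l γ - 1) / (1 + γ) ^ 2) * a *
          gdist γ z ^ (-1 - 2 * γ) * xnorm z.1 ^ (2 * γ) := by
  classical
  have hsz : 0 < GB.Sf z := GB.Sf_pos hx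
  have hρ : 0 < GB.rho γ z := GB.rho_pos hγ hsz
  have h1γ : (1 : ℝ) + γ ≠ 0 := by positivity
  have h2γ : (2 : ℝ) + 2 * γ ≠ 0 := by positivity
  have hΦ : (fun w => c * Real.exp (-a * (gdist γ w - R))) = GB.phiF (N := N) (l := l) γ a c R :=
    by funext w; rw [GB.gdist_eq γ w]; rfl
  rw [hΦ]
  simp only [grushin, deriv2]
  have hx2 : ∀ i : Fin N,
      iteratedFDeriv ℝ 2 (GB.phiF γ a c R) z ![(Pi.single i 1, 0), (Pi.single i 1, 0)] =
        (4 * (GB.phiF γ a c R z * (-a * (1 / (2 + 2 * γ) * GB.rho γ z ^ (1 / (2 + 2 * γ) - 1)))) *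
            (1 / (1 + γ) ^ 2 * (1 + γ)) * γ * GB.Sf z ^ (γ - 1) +
          4 * (1 / (1 + γ) ^ 2 * (1 + γ)) ^ 2 * (GB.Sf z ^ γ) ^ 2 *
            (GB.phiF γ a c R z *
                (-a * (1 / (2 + 2 * γ) * ((1 / (2 + 2 * γ) - 1) * GB.rho γ z ^ (1 / (2 + 2 * γ) - 1 - 1)))) +
              -a * (1 / (2 + 2 * γ) * GB.rho γ z ^ (1 / (2 + 2 * γ) - 1)) *
                (GB.phiF γ a c R z * (-a * (1 / (2 + 2 * γ) * GB.rho γ z ^ (1 / (2 + 2 * γ) - 1)))))) *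
          z.1 i ^ 2 +
        2 * (GB.phiF γ a c R z * (-a * (1 / (2 + 2 * γ) * GB.rho γ z ^ (1 / (2 + 2 * γ) - 1)))) *
          (1 / (1 + γ) ^ 2 * (1 + γ)) * GB.Sf z ^ γ := fun i => by
    rw [GB.deriv2_eq hγ hsz]; exact GB.fderiv_phiD_x hγ hsz i
  have hy2 : ∀ j : Fin l,
      iteratedFDeriv ℝ 2 (GB.phiF γ a c R) z ![(0, Pi.single j 1), (0, Pi.single j 1)] =
        4 * (GB.phiF γ a c R z *
              (-a * (1 / (2 + 2 * γ) * ((1 / (2 + 2 * γ) - 1) * GB.rho γ z ^ (1 / (2 + 2 * γ) - 1 - 1)))) +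
            -a * (1 / (2 + 2 * γ) * GB.rho γ z ^ (1 / (2 + 2 * γ) - 1)) *
              (GB.phiF γ a c R z * (-a * (1 / (2 + 2 * γ) * GB.rho γ z ^ (1 / (2 + 2 * γ) - 1))))) *
            z.2 j ^ 2 +
          2 * (GB.phiF γ a c R z * (-a * (1 / (2 + 2 * γ) * GB.rho γ z ^ (1 / (2 + 2 * γ) - 1)))) := fun j => by
    rw [GB.deriv2_eq hγ hsz]; exact GB.fderiv_phiD_y hγ hsz j
  rw [Finset.sum_congr rfl fun i _ => hx2 i, Finset.sum_congr rfl fun j _ => hy2 j]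
  rw [Finset.sum_add_distrib, Finset.sum_add_distrib, ← Finset.mul_sum, ← Finset.mul_sum,
    Finset.sum_const, Finset.sum_const, Finset.card_univ, Finset.card_univ,
    Fintype.card_fin, Fintype.card_fin, nsmul_eq_mul, nsmul_eq_mul, ← Finset.mul_sum]
  have hsum1 : (∑ i, z.1 i ^ 2) = GB.Sf z := rfl
  have hsum2 : (∑ j, z.2 j ^ 2) = GB.Tf z := rfl
  rw [hsum1, hsum2]
  have hxn : xnorm z.1 ^ (2 * γ) = GB.Sf z ^ γ := by
    rw [show xnorm z.1 = GB.Sf z ^ ((1:ℝ)/2) from Real.sqrt_eq_rpow _,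
      ← Real.rpow_mul (GB.Sf_nonneg z), show (1:ℝ)/2 * (2 * γ) = γ by ring]
  have hgd : gdist γ z = GB.rho γ z ^ (1 / (2 + 2 * γ)) := GB.gdist_eq γ z
  have e1 : (GB.rho γ z ^ (1 / (2 + 2 * γ))) ^ (-(2 * γ)) =
      (GB.rho γ z ^ (1 / (2 + 2 * γ) - 1)) ^ 2 * GB.rho γ z := by
    rw [← Real.rpow_mul hρ.le,
      show 1 / (2 + 2 * γ) * -(2 * γ) = (1 / (2 + 2 * γ) - 1) * 2 + 1 by field_simp; ring,
      Real.rpow_add hρ, Real.rpow_one, Real.rpow_mul hρ.le,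
      show ((2:ℝ) : ℝ) = ((2 : ℕ) : ℝ) by norm_num, Real.rpow_natCast]
  have e2 : (GB.rho γ z ^ (1 / (2 + 2 * γ))) ^ (-1 - 2 * γ) =
      GB.rho γ z ^ (1 / (2 + 2 * γ) - 1) := by
    rw [← Real.rpow_mul hρ.le]
    congr 1
    field_simp
    ring
  have eC : GB.rho γ z ^ (1 / (2 + 2 * γ) - 1 - 1) =
      GB.rho γ z ^ (1 / (2 + 2 * γ) - 1) / GB.rho γ z := by
    rw [Real.rpow_sub hρ, Real.rpow_one]
  have eB : GB.Sf z ^ (γ - 1) = GB.Sf z ^ γ / GB.Sf z := by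
    rw [Real.rpow_sub hsz, Real.rpow_one]
  have eT : GB.Tf z = GB.rho γ z - 1 / (1 + γ) ^ 2 * (GB.Sf z ^ γ * GB.Sf z) := by
    rw [GB.rho, show (1:ℝ) + γ = γ + 1 by ring, Real.rpow_add hsz, Real.rpow_one]
    ring
  rw [hxn, hgd, e1, e2, eC, eB, eT]
  simp only [GB.phiF, Ngamma]
  field_simp
  ring
end
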